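/- (Fact 1, key claim.) Let γ : ℝ^{Nd}_+ → ℝ be monotone and DR-submodular. For s ∈ ℝ^{Nd}_+ written in N blocks (s_1, …, s_N) with each s_i ∈ ℝ^d_+, let (0, s_{-i}) denote the vector obtained from s by replacing block i with the zero vector. Then for every s ∈ ℝ^{Nd}_+, ∑_{i=1}^N [γ(s) − γ(0, s_{-i})] ≤ γ(s) − γ(0). In particular, if γ(0) = 0, the designed game with payoffs π̂_i(s) = γ(s) − γ(0, s_{-i}) satisfies γ(s) ≥ ∑_{i=1}^N π̂_i(s). -/

import Mathlib

/-- `f` is monotone on `X`: `f x ≤ f y` whenever `x ≤ y` in `X`. -/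
def MonotoneOnSet {ι : Type*} (X : Set (ι → ℝ)) (f : (ι → ℝ) → ℝ) : Prop :=
  ∀ ⦃x⦄, x ∈ X → ∀ ⦃y⦄, y ∈ X → x ≤ y → f x ≤ f y

/-- `f` is DR-submodular on `X`. -/
def DRSubmodularOn {ι : Type*} [DecidableEq ι] (X : Set (ι → ℝ)) (f : (ι → ℝ) → ℝ) : Prop :=
  ∀ ⦃x y : ι → ℝ⦄, x ∈ X → y ∈ X → x ≤ y →
    ∀ i : ι, ∀ k : ℝ, 0 ≤ k →
      x + Pi.single i k ∈ X → y + Pi.single i k ∈ X →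
        f (x + Pi.single i k) - f x ≥ f (y + Pi.single i k) - f y

/-- Replace player `i`'s block of the joint strategy `s` by `v`, i.e. the outcome
`(v, s₋ᵢ)`. -/
def upd {N d : ℕ} (s : Fin N × Fin d → ℝ) (i : Fin N) (v : Fin d → ℝ) :
    Fin N × Fin d → ℝ :=
  fun q => if q.1 = i then v q.2 else s q

/-- Auxiliary: DR-submodularity extends from single-coordinate increments to arbitrary
nonnegative increments supported on a finite set. -/
lemma block_DR {ι : Type*} [Fintype ι] [DecidableEq ι] (f : (ι → ℝ) → ℝ)
    (hDR : DRSubmodularOn {x : ι → ℝ | 0 ≤ x} f) (T : Finset ι) :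
    ∀ (v x y : ι → ℝ), 0 ≤ v → 0 ≤ x → x ≤ y →
      f (y + ∑ j ∈ T, Pi.single j (v j)) - f y ≤
        f (x + ∑ j ∈ T, Pi.single j (v j)) - f x := by
  induction T using Finset.induction_on with
  | empty => intro v x y hv hx hxy; simp
  | @insert a T ha ih =>
      intro v x y hv hx hxy
      have hy : (0:ι → ℝ) ≤ y := le_trans hx hxy
      set w : ι → ℝ := ∑ j ∈ T, Pi.single j (v j) with hw
      have hwnn : (0:ι → ℝ) ≤ w := by
        apply Finset.sum_nonneg
        intro j _
        exact Pi.single_nonneg.mpr (hv j)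
      have hsum : ∑ j ∈ insert a T, Pi.single j (v j) = w + Pi.single a (v a) := by
        rw [Finset.sum_insert ha]; ring
      have hmemxw : x + w ∈ {x : ι → ℝ | 0 ≤ x} := by
        simp only [Set.mem_setOf_eq]; exact add_nonneg hx hwnn
      have hmemyw : y + w ∈ {x : ι → ℝ | 0 ≤ x} := by
        simp only [Set.mem_setOf_eq]; exact add_nonneg hy hwnn
      have hann : (0:ι → ℝ) ≤ Pi.single a (v a) := Pi.single_nonneg.mpr (hv a)
      have hmemxw' : x + w + Pi.single a (v a) ∈ {x : ι → ℝ | 0 ≤ x} := by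
        simp only [Set.mem_setOf_eq]; exact add_nonneg (add_nonneg hx hwnn) hann
      have hmemyw' : y + w + Pi.single a (v a) ∈ {x : ι → ℝ | 0 ≤ x} := by
        simp only [Set.mem_setOf_eq]; exact add_nonneg (add_nonneg hy hwnn) hann
      have hstep := hDR hmemxw hmemyw (by intro j; exact add_le_add (hxy j) (le_refl _))
        a (v a) (hv a) hmemxw' hmemyw'
      have hih := ih v x y hv hx hxy
      have e1 : y + ∑ j ∈ insert a T, Pi.single j (v j) = y + w + Pi.single a (v a) := by
        rw [hsum]; ring
      have e2 : x + ∑ j ∈ insert a T, Pi.single j (v j) = x + w + Pi.single a (v a) := by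
        rw [hsum]; ring
      rw [e1, e2]
      simp only [ge_iff_le] at hstep
      linarith

/-- Fact 1 (key claim): if `γ : ℝ^{Nd}_+ → ℝ` is monotone and DR-submodular, then the sum of
the marginal contributions `γ(s) − γ(0, s₋ᵢ)` over the players is at most `γ(s) − γ(0)`. -/
theorem sum_marginal_contributions_le {N d : ℕ}
    (γ : (Fin N × Fin d → ℝ) → ℝ)
    (hmono : MonotoneOnSet {x : Fin N × Fin d → ℝ | 0 ≤ x} γ)
    (hDR : DRSubmodularOn {x : Fin N × Fin d → ℝ | 0 ≤ x} γ) :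
    ∀ s : Fin N × Fin d → ℝ, 0 ≤ s →
      ∑ i : Fin N, (γ s - γ (upd s i 0)) ≤ γ s - γ 0 := by
  intro s hs
  -- prefix vectors
  set Z : ℕ → (Fin N × Fin d → ℝ) := fun k q => if (q.1 : ℕ) < k then s q else 0 with hZ
  have hZ0 : Z 0 = 0 := by funext q; simp [hZ]
  have hZN : Z N = s := by funext q; simp [hZ, q.1.isLt]
  -- the block increment of player i
  have key : ∀ i : Fin N, γ s - γ (upd s i 0) ≤ γ (Z (i + 1)) - γ (Z i) := by
    intro i
    set v : Fin N × Fin d → ℝ := fun q => if q.1 = i then s q else 0 with hv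
    have hvnn : (0:Fin N × Fin d → ℝ) ≤ v := by
      intro q
      show (0:ℝ) ≤ if q.1 = i then s q else 0
      by_cases h : q.1 = i
      · rw [if_pos h]; exact hs q
      · rw [if_neg h]
    have hZnn : (0:Fin N × Fin d → ℝ) ≤ Z i := by
      intro q
      show (0:ℝ) ≤ if (q.1:ℕ) < (i:ℕ) then s q else 0
      by_cases h : (q.1:ℕ) < (i:ℕ)
      · rw [if_pos h]; exact hs q
      · rw [if_neg h]
    have hle : Z i ≤ upd s i 0 := by
      intro q
      show (if (q.1:ℕ) < (i:ℕ) then s q else 0) ≤ if q.1 = i then (0:Fin d → ℝ) q.2 else s q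
      by_cases h : (q.1:ℕ) < (i:ℕ)
      · have hne : q.1 ≠ i := by
          intro he; rw [he] at h; exact lt_irrefl _ h
        rw [if_pos h, if_neg hne]
      · rw [if_neg h]
        by_cases h2 : q.1 = i
        · rw [if_pos h2]; simp
        · rw [if_neg h2]; exact hs q
    have e1 : upd s i 0 + v = s := by
      funext q
      show (if q.1 = i then (0:Fin d → ℝ) q.2 else s q) + (if q.1 = i then s q else 0) = s q
      by_cases h : q.1 = i
      · rw [if_pos h, if_pos h]; simp
      · rw [if_neg h, if_neg h]; simp
    have e2 : Z i + v = Z ((i:ℕ) + 1) := by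
      funext q
      show (if (q.1:ℕ) < (i:ℕ) then s q else 0) + (if q.1 = i then s q else 0)
          = if (q.1:ℕ) < (i:ℕ) + 1 then s q else 0
      by_cases h : q.1 = i
      · have hlt : ¬ ((q.1:ℕ) < (i:ℕ)) := by rw [h]; exact lt_irrefl _
        rw [if_neg hlt, if_pos h, if_pos (by omega : (q.1:ℕ) < (i:ℕ) + 1)]
        simp
      · have hne : (q.1:ℕ) ≠ (i:ℕ) := fun hc => h (Fin.ext hc)
        rw [if_neg h]
        by_cases h2 : (q.1:ℕ) < (i:ℕ)
        · rw [if_pos h2, if_pos (by omega : (q.1:ℕ) < (i:ℕ) + 1)]; simp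
        · rw [if_neg h2, if_neg (by omega : ¬ ((q.1:ℕ) < (i:ℕ) + 1))]; simp
    have := block_DR γ hDR Finset.univ v (Z i) (upd s i 0) hvnn hZnn hle
    rw [Finset.univ_sum_single v, e1, e2] at this
    exact this
  calc ∑ i : Fin N, (γ s - γ (upd s i 0))
      ≤ ∑ i : Fin N, (γ (Z ((i:ℕ) + 1)) - γ (Z i)) := Finset.sum_le_sum fun i _ => key i
    _ = ∑ k ∈ Finset.range N, (γ (Z (k + 1)) - γ (Z k)) :=
        Fin.sum_univ_eq_sum_range (fun k => γ (Z (k + 1)) - γ (Z k)) N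
    _ = γ (Z N) - γ (Z 0) := Finset.sum_range_sub (fun k => γ (Z k)) N
    _ = γ s - γ 0 := by rw [hZN, hZ0]
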